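/- arXiv:1703.04156 — 3 statements merged into one kernel-verified Lean document; each statement's English description precedes it below -/
import Mathlib

section
/- Let X be an integrable real-valued random variable on a probability space (Ω, 𝓕, P) and β ∈ (0,1), and set q := VaR_β(X) = inf{α ∈ ℝ : P(X ≤ α) ≥ β}. Then q is a global minimizer of the Rockafellar–Uryasev function: for every γ ∈ ℝ, q + (1 − β)⁻¹ · E[(X − q)⁺] ≤ γ + (1 − β)⁻¹ · E[(X − γ)⁺]. -/
open MeasureTheory Filter

private lemma VaR_aux
    {Ω : Type*} [MeasureSpace Ω] [IsProbabilityMeasure (volume : Measure Ω)]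
    (X : Ω → ℝ) (hm : Measurable X) (hX : Integrable X)
    (β : ℝ) (hβ : β ∈ Set.Ioo (0 : ℝ) 1)
    (q : ℝ) (hq : q = sInf {α : ℝ | (volume {ω | X ω ≤ α}).toReal ≥ β}) :
    ∀ γ : ℝ,
      q + (1 - β)⁻¹ * ∫ ω, max (X ω - q) 0 ≤
        γ + (1 - β)⁻¹ * ∫ ω, max (X ω - γ) 0 := by
  obtain ⟨hβ0, hβ1⟩ := hβ
  set μ : Measure Ω := volume with hμ
  set S : Set ℝ := {α : ℝ | (μ {ω | X ω ≤ α}).toReal ≥ β} with hS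
  have hmsle : ∀ a : ℝ, MeasurableSet {ω | X ω ≤ a} := fun a => hm measurableSet_Iic
  have hmono : ∀ {a b : ℝ}, a ≤ b → a ∈ S → b ∈ S := by
    intro a b hab ha
    exact le_trans ha (ENNReal.toReal_mono (measure_ne_top μ _)
      (measure_mono fun ω h => le_trans h hab))
  -- S is nonempty
  have hSne : S.Nonempty := by
    have hUnion : (⋃ n : ℕ, {ω | X ω ≤ (n : ℝ)}) = Set.univ := by
      ext ω
      simp only [Set.mem_iUnion, Set.mem_setOf_eq, Set.mem_univ, iff_true]
      exact exists_nat_ge (X ω)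
    have h1 : Tendsto (fun n : ℕ => μ {ω | X ω ≤ (n : ℝ)}) atTop (nhds 1) := by
      have := tendsto_measure_iUnion_atTop (μ := μ)
        (s := fun n : ℕ => {ω | X ω ≤ (n : ℝ)})
        (fun a b hab ω h => by
          simp only [Set.mem_setOf_eq] at h ⊢
          exact le_trans h (Nat.cast_le.mpr hab))
      rwa [hUnion, measure_univ] at this
    have h2 : Tendsto (fun n : ℕ => (μ {ω | X ω ≤ (n : ℝ)}).toReal) atTop (nhds 1) := by
      have := (ENNReal.tendsto_toReal ENNReal.one_ne_top).comp h1
      simpa [Function.comp_def] using this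
    obtain ⟨n, hn⟩ := (h2.eventually (eventually_gt_nhds hβ1)).exists
    exact ⟨(n : ℝ), le_of_lt hn⟩
  -- S is bounded below
  have hSbd : BddBelow S := by
    have hInter : (⋂ n : ℕ, {ω | X ω ≤ -(n : ℝ)}) = ∅ := by
      ext ω
      simp only [Set.mem_iInter, Set.mem_setOf_eq, Set.mem_empty_iff_false, iff_false,
        not_forall, not_le]
      obtain ⟨n, hn⟩ := exists_nat_gt (-X ω)
      exact ⟨n, by linarith⟩
    have h1 : Tendsto (fun n : ℕ => μ {ω | X ω ≤ -(n : ℝ)}) atTop (nhds 0) := by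
      have := tendsto_measure_iInter_atTop (μ := μ)
        (s := fun n : ℕ => {ω | X ω ≤ -(n : ℝ)})
        (fun n => (hmsle _).nullMeasurableSet)
        (fun a b hab ω h => by
          simp only [Set.mem_setOf_eq] at h ⊢
          exact le_trans h (neg_le_neg (Nat.cast_le.mpr hab)))
        ⟨0, measure_ne_top μ _⟩
      rwa [hInter, measure_empty] at this
    have h2 : Tendsto (fun n : ℕ => (μ {ω | X ω ≤ -(n : ℝ)}).toReal) atTop (nhds 0) := by
      have := (ENNReal.tendsto_toReal ENNReal.zero_ne_top).comp h1
      simpa [Function.comp_def] using this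
    obtain ⟨n, hn⟩ := (h2.eventually (eventually_lt_nhds hβ0)).exists
    refine ⟨-(n : ℝ), fun a ha => ?_⟩
    by_contra hcon
    push_neg at hcon
    exact not_le.mpr hn (hmono (le_of_lt hcon) ha)
  -- P(X ≤ q) ≥ β
  have hBq : β ≤ (μ {ω | X ω ≤ q}).toReal := by
    have hqmem : ∀ n : ℕ, q + 1 / (n + 1) ∈ S := by
      intro n
      have hpos : (0 : ℝ) < 1 / ((n : ℝ) + 1) := by positivity
      have h : sInf S < q + 1 / (n + 1) := by rw [← hq]; linarith
      obtain ⟨a, haS, ha⟩ := exists_lt_of_csInf_lt hSne h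
      exact hmono (le_of_lt ha) haS
    have hInterq : {ω | X ω ≤ q} = ⋂ n : ℕ, {ω | X ω ≤ q + 1 / (n + 1)} := by
      ext ω
      simp only [Set.mem_iInter, Set.mem_setOf_eq]
      constructor
      · intro h n
        have hpos : (0 : ℝ) < 1 / ((n : ℝ) + 1) := by positivity
        linarith
      · intro h
        by_contra hc
        push_neg at hc
        obtain ⟨n, hn⟩ := exists_nat_one_div_lt (sub_pos.mpr hc)
        exact absurd (h n) (by push_neg; linarith)
    have ht : Tendsto (fun n : ℕ => μ {ω | X ω ≤ q + 1 / (n + 1)}) atTop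
        (nhds (μ {ω | X ω ≤ q})) := by
      rw [hInterq]
      refine tendsto_measure_iInter_atTop (fun n => (hmsle _).nullMeasurableSet)
        (fun a b hab ω h => ?_) ⟨0, measure_ne_top μ _⟩
      simp only [Set.mem_setOf_eq] at h ⊢
      have h2 : (1 : ℝ) / ((b : ℝ) + 1) ≤ 1 / ((a : ℝ) + 1) := by
        apply one_div_le_one_div_of_le (by positivity)
        have : (a:ℝ) ≤ (b:ℝ) := Nat.cast_le.mpr hab
        linarith
      linarith
    have ht2 : Tendsto (fun n : ℕ => (μ {ω | X ω ≤ q + 1 / (n + 1)}).toReal) atTop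
        (nhds ((μ {ω | X ω ≤ q}).toReal)) :=
      (ENNReal.tendsto_toReal (measure_ne_top μ _)).comp ht
    exact ge_of_tendsto ht2 (Eventually.of_forall fun n => hqmem n)
  -- P(X < q) ≤ β
  have hBq' : (μ {ω | X ω < q}).toReal ≤ β := by
    have hqnot : ∀ n : ℕ, (μ {ω | X ω ≤ q - 1 / (n + 1)}).toReal ≤ β := by
      intro n
      by_contra hc
      push_neg at hc
      have hmem : q - 1 / (n + 1) ∈ S := le_of_lt hc
      have := csInf_le hSbd hmem
      rw [← hq] at this
      have hpos : (0 : ℝ) < 1 / ((n : ℝ) + 1) := by positivity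
      linarith
    have hUnionq : {ω | X ω < q} = ⋃ n : ℕ, {ω | X ω ≤ q - 1 / (n + 1)} := by
      ext ω
      simp only [Set.mem_iUnion, Set.mem_setOf_eq]
      constructor
      · intro h
        obtain ⟨n, hn⟩ := exists_nat_one_div_lt (sub_pos.mpr h)
        exact ⟨n, by linarith⟩
      · rintro ⟨n, hn⟩
        have hpos : (0 : ℝ) < 1 / ((n : ℝ) + 1) := by positivity
        linarith
    have ht : Tendsto (fun n : ℕ => μ {ω | X ω ≤ q - 1 / (n + 1)}) atTop
        (nhds (μ {ω | X ω < q})) := by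
      rw [hUnionq]
      refine tendsto_measure_iUnion_atTop (fun a b hab ω h => ?_)
      simp only [Set.mem_setOf_eq] at h ⊢
      have h2 : (1 : ℝ) / ((b : ℝ) + 1) ≤ 1 / ((a : ℝ) + 1) := by
        apply one_div_le_one_div_of_le (by positivity)
        have : (a:ℝ) ≤ (b:ℝ) := Nat.cast_le.mpr hab
        linarith
      linarith
    have ht2 : Tendsto (fun n : ℕ => (μ {ω | X ω ≤ q - 1 / (n + 1)}).toReal) atTop
        (nhds ((μ {ω | X ω < q}).toReal)) :=
      (ENNReal.tendsto_toReal (measure_ne_top μ _)).comp ht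
    exact le_of_tendsto ht2 (Eventually.of_forall fun n => hqnot n)
  -- main argument
  intro γ
  have hc : (0 : ℝ) < (1 - β)⁻¹ := inv_pos.mpr (by linarith)
  have hβne : (1 : ℝ) - β ≠ 0 := by linarith
  have hIq : Integrable (fun ω => max (X ω - q) 0) := by
    simpa [max_comm] using (hX.sub (integrable_const q)).pos_part
  have hIγ : Integrable (fun ω => max (X ω - γ) 0) := by
    simpa [max_comm] using (hX.sub (integrable_const γ)).pos_part
  rcases le_total q γ with hqγ | hγq
  · -- case q ≤ γ
    have hA : MeasurableSet {ω | q < X ω} := hm measurableSet_Ioi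
    have hPA : (μ {ω | q < X ω}).toReal ≤ 1 - β := by
      have hcompl : {ω | q < X ω} = {ω | X ω ≤ q}ᶜ := by ext ω; simp [not_le]
      rw [hcompl, prob_compl_eq_one_sub (s := {ω | X ω ≤ q}) (hmsle q),
        ENNReal.toReal_sub_of_le prob_le_one ENNReal.one_ne_top]
      simp only [ENNReal.toReal_one]
      linarith
    have hptw : ∀ ω, max (X ω - q) 0 - max (X ω - γ) 0 ≤
        Set.indicator {ω | q < X ω} (fun _ => γ - q) ω := by
      intro ω
      by_cases h : q < X ω
      · rw [Set.indicator_of_mem (show ω ∈ {ω | q < X ω} from h)]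
        rcases le_total (X ω) γ with h2 | h2
        · have m1 : max (X ω - q) 0 = X ω - q := max_eq_left (by linarith)
          have m2 : (0 : ℝ) ≤ max (X ω - γ) 0 := le_max_right _ _
          linarith
        · have m1 : max (X ω - q) 0 = X ω - q := max_eq_left (by linarith)
          have m2 : max (X ω - γ) 0 = X ω - γ := max_eq_left (by linarith)
          linarith
      · rw [Set.indicator_of_notMem (show ω ∉ {ω | q < X ω} from h)]
        push_neg at h
        have m1 : max (X ω - q) 0 = 0 := max_eq_right (by linarith)
        have m2 : (0 : ℝ) ≤ max (X ω - γ) 0 := le_max_right _ _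
        linarith
    have hint : (∫ ω, max (X ω - q) 0) - ∫ ω, max (X ω - γ) 0 ≤
        (γ - q) * (μ {ω | q < X ω}).toReal := by
      have h1 := integral_mono (hIq.sub hIγ)
        ((integrable_const (γ - q)).indicator hA) hptw
      rw [integral_indicator_const _ hA, smul_eq_mul, mul_comm] at h1
      simp only [Pi.sub_apply] at h1
      rw [integral_sub hIq hIγ] at h1
      exact h1
    have hfin : (∫ ω, max (X ω - q) 0) - ∫ ω, max (X ω - γ) 0 ≤ (γ - q) * (1 - β) :=
      hint.trans (mul_le_mul_of_nonneg_left hPA (by linarith))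
    have hkey : (1 - β)⁻¹ * ((γ - q) * (1 - β)) = γ - q := by field_simp
    nlinarith [mul_le_mul_of_nonneg_left hfin (le_of_lt hc)]
  · -- case γ ≤ q
    have hA : MeasurableSet {ω | q ≤ X ω} := hm measurableSet_Ici
    have hPA : 1 - β ≤ (μ {ω | q ≤ X ω}).toReal := by
      have hcompl : {ω | q ≤ X ω} = {ω | X ω < q}ᶜ := by ext ω; simp [not_lt]
      rw [hcompl, prob_compl_eq_one_sub (s := {ω | X ω < q}) (hm measurableSet_Iio),
        ENNReal.toReal_sub_of_le prob_le_one ENNReal.one_ne_top]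
      simp only [ENNReal.toReal_one]
      linarith
    have hptw : ∀ ω, Set.indicator {ω | q ≤ X ω} (fun _ => q - γ) ω ≤
        max (X ω - γ) 0 - max (X ω - q) 0 := by
      intro ω
      by_cases h : q ≤ X ω
      · rw [Set.indicator_of_mem (show ω ∈ {ω | q ≤ X ω} from h)]
        have m1 : max (X ω - γ) 0 = X ω - γ := max_eq_left (by linarith)
        have m2 : max (X ω - q) 0 = X ω - q := max_eq_left (by linarith)
        linarith
      · rw [Set.indicator_of_notMem (show ω ∉ {ω | q ≤ X ω} from h)]
        push_neg at h
        have m1 : max (X ω - q) 0 = 0 := max_eq_right (by linarith)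
        have m2 : (0 : ℝ) ≤ max (X ω - γ) 0 := le_max_right _ _
        linarith
    have hint : (q - γ) * (μ {ω | q ≤ X ω}).toReal ≤
        (∫ ω, max (X ω - γ) 0) - ∫ ω, max (X ω - q) 0 := by
      have h1 := integral_mono ((integrable_const (q - γ)).indicator hA)
        (hIγ.sub hIq) hptw
      rw [integral_indicator_const _ hA, smul_eq_mul, mul_comm] at h1
      simp only [Pi.sub_apply] at h1
      rw [integral_sub hIγ hIq] at h1
      exact h1
    have hfin : (q - γ) * (1 - β) ≤ (∫ ω, max (X ω - γ) 0) - ∫ ω, max (X ω - q) 0 :=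
      le_trans (mul_le_mul_of_nonneg_left hPA (by linarith)) hint
    have hkey : (1 - β)⁻¹ * ((q - γ) * (1 - β)) = q - γ := by field_simp
    nlinarith [mul_le_mul_of_nonneg_left hfin (le_of_lt hc)]

/-- The Value at Risk `q = VaR_β(X) = inf {α : P(X ≤ α) ≥ β}` is a global minimizer of the
Rockafellar–Uryasev function `γ ↦ γ + (1 − β)⁻¹ · E[(X − γ)⁺]`. -/
theorem VaR_minimizes_rockafellarUryasev
    {Ω : Type*} [MeasureSpace Ω] [IsProbabilityMeasure (volume : Measure Ω)]
    (X : Ω → ℝ) (hX : Integrable X)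
    (β : ℝ) (hβ : β ∈ Set.Ioo (0 : ℝ) 1)
    (q : ℝ) (hq : q = sInf {α : ℝ | (volume {ω | X ω ≤ α}).toReal ≥ β}) :
    ∀ γ : ℝ,
      q + (1 - β)⁻¹ * ∫ ω, max (X ω - q) 0 ≤
        γ + (1 - β)⁻¹ * ∫ ω, max (X ω - γ) 0 := by
  have hae := hX.aestronglyMeasurable
  set Y : Ω → ℝ := hae.mk X with hYdef
  have hXY : X =ᵐ[volume] Y := hae.ae_eq_mk
  have hmY : Measurable Y := hae.stronglyMeasurable_mk.measurable
  have hYint : Integrable Y := hX.congr hXY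
  have hsets : ∀ a : ℝ, volume {ω | X ω ≤ a} = volume {ω | Y ω ≤ a} := fun a =>
    measure_congr (Filter.eventuallyEq_set.mpr (hXY.mono fun ω h => by
      simp only [Set.mem_setOf_eq, h]))
  have hq' : q = sInf {α : ℝ | (volume {ω | Y ω ≤ α}).toReal ≥ β} := by
    rw [hq]
    congr 1
    ext a
    simp only [Set.mem_setOf_eq, hsets a]
  have hints : ∀ g : ℝ, (∫ ω, max (X ω - g) 0) = ∫ ω, max (Y ω - g) 0 := fun g =>
    integral_congr_ae (hXY.mono fun ω h => by simp only [h])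
  intro γ
  rw [hints q, hints γ]
  exact VaR_aux Y hmY hYint β hβ q hq' γ
end

section
/- Let X be an integrable real-valued random variable on a probability space (Ω, 𝓕, P) whose cumulative distribution function F(α) = P(X ≤ α) is continuous, let β ∈ (0,1), and set q := VaR_β(X) = inf{α ∈ ℝ : P(X ≤ α) ≥ β}. Then the minimum value of the Rockafellar–Uryasev function equals the Conditional Value at Risk: q + (1 − β)⁻¹ · E[(X − q)⁺] = (1 − β)⁻¹ · E[X · 𝟙{X ≥ q}]. -/
open MeasureTheory Filter Topology

/-- For a random variable with continuous CDF, the value of the Rockafellar–Uryasev function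
at `q = VaR_β(X)` equals the Conditional Value at Risk:
`q + (1 − β)⁻¹ · E[(X − q)⁺] = (1 − β)⁻¹ · E[X · 𝟙{X ≥ q}]`. -/
theorem rockafellarUryasev_at_VaR_eq_CVaR
    {Ω : Type*} [MeasureSpace Ω] [IsProbabilityMeasure (volume : Measure Ω)]
    (X : Ω → ℝ) (hX : Integrable X) (hXm : Measurable X)
    (hF : Continuous fun α : ℝ => (volume {ω | X ω ≤ α}).toReal)
    (β : ℝ) (hβ : β ∈ Set.Ioo (0 : ℝ) 1)
    (q : ℝ) (hq : q = sInf {α : ℝ | (volume {ω | X ω ≤ α}).toReal ≥ β}) :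
    q + (1 - β)⁻¹ * ∫ ω, max (X ω - q) 0 =
      (1 - β)⁻¹ * ∫ ω, Set.indicator {ω' | X ω' ≥ q} X ω := by
  obtain ⟨hβ0, hβ1⟩ := hβ
  set F : ℝ → ℝ := fun α => (volume {ω | X ω ≤ α}).toReal with hFdef
  have hfin : ∀ s : Set Ω, volume s ≠ ⊤ := fun s => (measure_lt_top _ _).ne
  have hmono : Monotone F := fun a b hab =>
    ENNReal.toReal_mono (hfin _) (measure_mono fun ω h => le_trans h hab)
  set S : Set ℝ := {α : ℝ | F α ≥ β} with hSdef
  -- S is nonempty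
  have hSne : S.Nonempty := by
    have hU : (⋃ n : ℕ, {ω | X ω ≤ (n : ℝ)}) = Set.univ := by
      ext ω
      simp only [Set.mem_iUnion, Set.mem_univ, iff_true, Set.mem_setOf_eq]
      exact exists_nat_ge (X ω)
    have h1 : Tendsto (fun n : ℕ => volume {ω | X ω ≤ (n : ℝ)}) atTop
        (𝓝 (volume (⋃ n : ℕ, {ω | X ω ≤ (n : ℝ)}))) :=
      tendsto_measure_iUnion_atTop (fun a b hab ω h => by
        simp only [Set.mem_setOf_eq] at h ⊢
        exact h.trans (by exact_mod_cast hab))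
    rw [hU, measure_univ] at h1
    have h2 : Tendsto (fun n : ℕ => F n) atTop (𝓝 1) := by
      have := (ENNReal.tendsto_toReal (by norm_num : (1 : ENNReal) ≠ ⊤)).comp h1
      simpa [Function.comp_def, F] using this
    obtain ⟨n, hn⟩ := (h2.eventually (eventually_ge_nhds hβ1)).exists
    exact ⟨n, hn⟩
  -- S is bounded below
  have hSbdd : BddBelow S := by
    have hI : (⋂ n : ℕ, {ω | X ω ≤ -(n : ℝ)}) = ∅ := by
      ext ω
      simp only [Set.mem_iInter, Set.mem_setOf_eq, Set.mem_empty_iff_false, iff_false, not_forall]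
      obtain ⟨n, hn⟩ := exists_nat_gt (-(X ω))
      exact ⟨n, by push_neg; linarith⟩
    have h1 : Tendsto (fun n : ℕ => volume {ω | X ω ≤ -(n : ℝ)}) atTop
        (𝓝 (volume (⋂ n : ℕ, {ω | X ω ≤ -(n : ℝ)}))) := by
      apply tendsto_measure_iInter_atTop (fun n => (hXm measurableSet_Iic).nullMeasurableSet)
        (fun a b hab ω h => by
          have h' : X ω ≤ -(b : ℝ) := h
          have : (a : ℝ) ≤ b := Nat.cast_le.mpr hab
          show X ω ≤ -(a : ℝ)
          linarith) ⟨0, hfin _⟩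
    rw [hI, measure_empty] at h1
    have h2 : Tendsto (fun n : ℕ => F (-(n : ℝ))) atTop (𝓝 0) := by
      have := (ENNReal.tendsto_toReal (by norm_num : (0 : ENNReal) ≠ ⊤)).comp h1
      simpa [Function.comp_def, F] using this
    obtain ⟨n, hn⟩ := (h2.eventually (eventually_lt_nhds hβ0)).exists
    refine ⟨-(n : ℝ), fun x hx => ?_⟩
    by_contra hlt
    push_neg at hlt
    exact absurd (le_trans hx (hmono hlt.le)) (not_le.mpr hn)
  -- S is closed
  have hSclosed : IsClosed S := isClosed_le continuous_const hF
  -- q ∈ S, hence F q ≥ β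
  have hqS : F q ≥ β := by rw [hq]; exact hSclosed.csInf_mem hSne hSbdd
  -- F q ≤ β via left approximation
  have hqle : F q ≤ β := by
    have hseq : Tendsto (fun n : ℕ => q - 1 / (n + 1)) atTop (𝓝 q) := by
      have : Tendsto (fun n : ℕ => 1 / ((n : ℝ) + 1)) atTop (𝓝 0) :=
        tendsto_one_div_add_atTop_nhds_zero_nat
      simpa using tendsto_const_nhds.sub this
    have hFt : Tendsto (fun n : ℕ => F (q - 1 / (n + 1))) atTop (𝓝 (F q)) :=
      (hF.tendsto q).comp hseq
    refine le_of_tendsto hFt (Eventually.of_forall fun n => ?_)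
    by_contra hcon
    push_neg at hcon
    have hmem : q - 1 / (n + 1) ∈ S := le_of_lt hcon
    have := csInf_le hSbdd hmem
    rw [← hq] at this
    have hpos : (0 : ℝ) < 1 / ((n : ℝ) + 1) := by positivity
    linarith
  have hFq : F q = β := le_antisymm hqle hqS
  -- measure of {X < q} equals β
  have hlt : (volume {ω | X ω < q}).toReal = β := by
    have hU : {ω | X ω < q} = ⋃ n : ℕ, {ω | X ω ≤ q - 1 / (n + 1)} := by
      ext ω
      simp only [Set.mem_setOf_eq, Set.mem_iUnion]
      constructor
      · intro h
        obtain ⟨n, hn⟩ := exists_nat_one_div_lt (sub_pos.mpr h)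
        exact ⟨n, by linarith⟩
      · rintro ⟨n, hn⟩
        have : (0 : ℝ) < 1 / ((n : ℝ) + 1) := by positivity
        linarith
    have h1 : Tendsto (fun n : ℕ => volume {ω | X ω ≤ q - 1 / (n + 1)}) atTop
        (𝓝 (volume {ω | X ω < q})) := by
      rw [hU]
      apply tendsto_measure_iUnion_atTop
      intro a b hab ω h
      have : 1 / ((b : ℝ) + 1) ≤ 1 / ((a : ℝ) + 1) := by
        apply one_div_le_one_div_of_le (by positivity)
        exact_mod_cast add_le_add_left (Nat.cast_le.mpr hab) 1
      simp only [Set.mem_setOf_eq] at h ⊢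
      linarith
    have h2 : Tendsto (fun n : ℕ => F (q - 1 / (n + 1))) atTop
        (𝓝 (volume {ω | X ω < q}).toReal) := by
      have := (ENNReal.tendsto_toReal (hfin _)).comp h1
      simpa [Function.comp_def, F] using this
    have hseq : Tendsto (fun n : ℕ => q - 1 / (n + 1)) atTop (𝓝 q) := by
      have : Tendsto (fun n : ℕ => 1 / ((n : ℝ) + 1)) atTop (𝓝 0) :=
        tendsto_one_div_add_atTop_nhds_zero_nat
      simpa using tendsto_const_nhds.sub this
    have h3 : Tendsto (fun n : ℕ => F (q - 1 / (n + 1))) atTop (𝓝 (F q)) :=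
      (hF.tendsto q).comp hseq
    rw [← hFq]
    exact tendsto_nhds_unique h2 h3
  -- measure of the tail set
  have hsmeas : MeasurableSet {ω' | X ω' ≥ q} := hXm measurableSet_Ici
  have htail : (volume {ω' | X ω' ≥ q}).toReal = 1 - β := by
    have hcompl : {ω' | X ω' ≥ q} = {ω | X ω < q}ᶜ := by
      ext ω; simp [not_lt]
    have hm' : MeasurableSet {ω | X ω < q} := hXm measurableSet_Iio
    rw [hcompl, measure_compl hm' (hfin _), measure_univ,
      ENNReal.toReal_sub_of_le (measure_mono (Set.subset_univ _) |>.trans_eq measure_univ)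
        (by norm_num), ENNReal.toReal_one, hlt]
  -- rewrite integrals
  have h3 : ∫ ω, max (X ω - q) 0 = ∫ ω in {ω' | X ω' ≥ q}, (X ω - q) := by
    rw [← integral_indicator hsmeas]
    congr 1
    ext ω
    by_cases h : q ≤ X ω
    · simp [Set.indicator_apply, Set.mem_setOf_eq, h, max_eq_left (sub_nonneg.mpr h)]
    · simp [Set.indicator_apply, Set.mem_setOf_eq, h, max_eq_right (sub_nonpos.mpr (le_of_not_ge h))]
  have h4 : ∫ ω, Set.indicator {ω' | X ω' ≥ q} X ω = ∫ ω in {ω' | X ω' ≥ q}, X ω :=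
    integral_indicator hsmeas
  have h5 : ∫ ω in {ω' | X ω' ≥ q}, (X ω - q) =
      (∫ ω in {ω' | X ω' ≥ q}, X ω) - (1 - β) * q := by
    rw [integral_sub hX.integrableOn (integrable_const q).integrableOn, setIntegral_const, measureReal_def,
      htail, smul_eq_mul]
  rw [h3, h4, h5]
  have hne : (1 : ℝ) - β ≠ 0 := by linarith
  field_simp
  ring
end

section
/- Let X₁, …, X_N be independent, identically distributed real-valued random variables on a probability space (Ω, 𝓕, P) whose common cumulative distribution function F is continuous, let β ∈ (0,1) with F(q_β) = β where q_β := inf{α ∈ ℝ : F(α) ≥ β}, and let 1 ≤ l < u ≤ N be integers. Then the probability that the β-quantile q_β is bracketed by the l-th and u-th order statistics satisfies P( X_{(l)} ≤ q_β ≤ X_{(u)} ) ≥ Σ_{i=l}^{u−1} C(N, i) · β^i · (1 − β)^(N − i), where X_{(1)} ≤ ⋯ ≤ X_{(N)} denotes the sample sorted in increasing order; equivalently, the event on the left is the event that at least l of the samples satisfy X_i ≤ q_β and at most u − 1 of the samples satisfy X_i < q_β. -/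
open MeasureTheory ProbabilityTheory

/-- Order-statistic confidence bound for the `β`-quantile: for i.i.d. samples `X₁, …, X_N` with
common continuous CDF `F` and `F(q_β) = β`, where `q_β = inf {α : F α ≥ β}`, the probability
that `q_β` lies between the `l`-th and `u`-th order statistics (i.e. that at least `l` samples
satisfy `X i ≤ q_β` and at most `u − 1` samples satisfy `X i < q_β`) is at least
`Σ_{i=l}^{u−1} C(N,i) β^i (1−β)^(N−i)`. -/
theorem orderStatistics_bracket_quantile
    {Ω : Type*} [MeasureSpace Ω] [IsProbabilityMeasure (volume : Measure Ω)]
    {N : ℕ} (X : Fin N → Ω → ℝ) (hXm : ∀ i, Measurable (X i))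
    (hindep : iIndepFun (m := fun _ : Fin N => (inferInstance : MeasurableSpace ℝ)) X volume)
    (F : ℝ → ℝ) (hF : ∀ i α, (volume {ω | X i ω ≤ α}).toReal = F α)
    (hFcont : Continuous F)
    (β : ℝ) (hβ : β ∈ Set.Ioo (0 : ℝ) 1)
    (q : ℝ) (hq : q = sInf {α : ℝ | F α ≥ β}) (hFq : F q = β)
    (l u : ℕ) (hl : 1 ≤ l) (hlu : l < u) (hu : u ≤ N) :
    (volume {ω | l ≤ (Finset.univ.filter fun i : Fin N => X i ω ≤ q).card ∧
        (Finset.univ.filter fun i : Fin N => X i ω < q).card ≤ u - 1}).toReal ≥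
      ∑ i ∈ Finset.Ico l u, (N.choose i : ℝ) * β ^ i * (1 - β) ^ (N - i) := by
  obtain ⟨hβ0, hβ1⟩ := hβ
  set A : Fin N → Set Ω := fun i => {ω | X i ω ≤ q} with hAdef
  have hAm : ∀ i, MeasurableSet (A i) := fun i => (hXm i) measurableSet_Iic
  have hvolA : ∀ i, volume (A i) = ENNReal.ofReal β := by
    intro i
    have h1 : (volume (A i)).toReal = β := by
      have := hF i q; rw [hFq] at this; exact this
    rw [← h1, ENNReal.ofReal_toReal (measure_ne_top _ _)]
  have hvolAc : ∀ i, volume (A i)ᶜ = ENNReal.ofReal (1 - β) := by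
    intro i
    rw [measure_compl (hAm i) (measure_ne_top _ _), hvolA i, measure_univ,
      ENNReal.ofReal_sub _ hβ0.le, ENNReal.ofReal_one]
  set B : Finset (Fin N) → Set Ω := fun s => ⋂ i, (if i ∈ s then A i else (A i)ᶜ) with hBdef
  have hBm : ∀ s, MeasurableSet (B s) := by
    intro s
    refine MeasurableSet.iInter fun i => ?_
    split
    · exact hAm i
    · exact (hAm i).compl
  have hBmem : ∀ s ω, ω ∈ B s ↔ (Finset.univ.filter fun i : Fin N => X i ω ≤ q) = s := by
    intro s ω
    simp only [hBdef, Set.mem_iInter, Finset.ext_iff, Finset.mem_filter, Finset.mem_univ,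
      true_and]
    constructor
    · intro h i
      specialize h i
      constructor
      · intro hx
        by_contra hi
        rw [if_neg hi] at h
        exact h hx
      · intro hi
        rw [if_pos hi] at h
        exact h
    · intro h i
      by_cases hi : i ∈ s
      · rw [if_pos hi]
        exact (h i).mpr hi
      · rw [if_neg hi]
        exact fun hx => hi ((h i).mp hx)
  have hBvol : ∀ s : Finset (Fin N),
      volume (B s) = ENNReal.ofReal β ^ s.card * ENNReal.ofReal (1 - β) ^ (N - s.card) := by
    intro s
    have hmeas : ∀ i, MeasurableSet[MeasurableSpace.comap (X i) inferInstance]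
        (if i ∈ s then A i else (A i)ᶜ) := by
      intro i
      by_cases hi : i ∈ s
      · rw [if_pos hi]
        exact ⟨Set.Iic q, measurableSet_Iic, rfl⟩
      · rw [if_neg hi]
        refine ⟨Set.Ioi q, measurableSet_Ioi, ?_⟩
        ext ω
        show q < X i ω ↔ ¬(X i ω ≤ q)
        exact not_le.symm
    have hprod := hindep.meas_iInter hmeas
    calc volume (B s) = ∏ i : Fin N, volume (if i ∈ s then A i else (A i)ᶜ) := hprod
      _ = ∏ i : Fin N, (if i ∈ s then ENNReal.ofReal β else ENNReal.ofReal (1 - β)) := by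
          refine Finset.prod_congr rfl fun i _ => ?_
          split
          · exact hvolA i
          · exact hvolAc i
      _ = ENNReal.ofReal β ^ s.card * ENNReal.ofReal (1 - β) ^ (N - s.card) := by
          rw [Finset.prod_ite, Finset.prod_const, Finset.prod_const,
            Finset.filter_mem_eq_inter, Finset.univ_inter]
          congr 1
          have : Finset.univ.filter (fun i => i ∉ s) = sᶜ := by
            ext i; simp
          rw [this, Finset.card_compl, Fintype.card_fin]
  -- events by count
  set E : ℕ → Set Ω := fun k =>
    {ω | (Finset.univ.filter fun i : Fin N => X i ω ≤ q).card = k} with hEdef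
  have hEeq : ∀ k, E k = ⋃ s ∈ Finset.powersetCard k (Finset.univ : Finset (Fin N)), B s := by
    intro k
    ext ω
    simp only [hEdef, Set.mem_setOf_eq, Set.mem_iUnion, Finset.mem_powersetCard_univ]
    constructor
    · intro h
      exact ⟨_, h, (hBmem _ ω).mpr rfl⟩
    · rintro ⟨s, hs, hb⟩
      rw [(hBmem s ω).mp hb]; exact hs
  have hEm : ∀ k, MeasurableSet (E k) := by
    intro k; rw [hEeq k]; exact (Finset.powersetCard k _).measurableSet_biUnion fun s _ => hBm s
  have hEvol : ∀ k, volume (E k) =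
      (N.choose k) • (ENNReal.ofReal β ^ k * ENNReal.ofReal (1 - β) ^ (N - k)) := by
    intro k
    rw [hEeq k]
    rw [measure_biUnion_finset ?_ (fun s _ => hBm s)]
    · rw [Finset.sum_congr rfl (fun s hs => ?_), Finset.sum_const, Finset.card_powersetCard,
        Finset.card_univ, Fintype.card_fin]
      rw [hBvol s, (Finset.mem_powersetCard_univ.mp hs)]
    · intro s hs t ht hst
      simp only [Function.onFun]
      rw [Set.disjoint_left]
      intro ω hωs hωt
      exact hst (((hBmem s ω).mp hωs).symm.trans ((hBmem t ω).mp hωt))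
  -- superset
  have hsub : ⋃ k ∈ Finset.Ico l u, E k ⊆
      {ω | l ≤ (Finset.univ.filter fun i : Fin N => X i ω ≤ q).card ∧
        (Finset.univ.filter fun i : Fin N => X i ω < q).card ≤ u - 1} := by
    intro ω hω
    simp only [Set.mem_iUnion, Finset.mem_Ico, hEdef, Set.mem_setOf_eq] at hω
    obtain ⟨k, ⟨hkl, hku⟩, hk⟩ := hω
    refine ⟨hk ▸ hkl, ?_⟩
    have h1 : (Finset.univ.filter fun i : Fin N => X i ω < q).card ≤
        (Finset.univ.filter fun i : Fin N => X i ω ≤ q).card := by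
      refine Finset.card_le_card ?_
      intro i hi
      simp only [Finset.mem_filter] at hi ⊢
      exact ⟨hi.1, hi.2.le⟩
    calc (Finset.univ.filter fun i : Fin N => X i ω < q).card
        ≤ (Finset.univ.filter fun i : Fin N => X i ω ≤ q).card := h1
      _ = k := hk
      _ ≤ u - 1 := Nat.le_sub_one_of_lt hku
  have hUvol : volume (⋃ k ∈ Finset.Ico l u, E k) =
      ∑ k ∈ Finset.Ico l u, (N.choose k) •
        (ENNReal.ofReal β ^ k * ENNReal.ofReal (1 - β) ^ (N - k)) := by
    rw [measure_biUnion_finset ?_ (fun k _ => hEm k)]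
    · exact Finset.sum_congr rfl fun k _ => hEvol k
    · intro j hj k hk hjk
      simp only [Function.onFun]
      rw [Set.disjoint_left]
      intro ω hωj hωk
      simp only [hEdef, Set.mem_setOf_eq] at hωj hωk
      exact hjk (hωj.symm.trans hωk)
  have hmono := measure_mono (μ := (volume : Measure Ω)) hsub
  have hfin : volume {ω | l ≤ (Finset.univ.filter fun i : Fin N => X i ω ≤ q).card ∧
        (Finset.univ.filter fun i : Fin N => X i ω < q).card ≤ u - 1} ≠ ⊤ :=
    measure_ne_top _ _
  have htr := ENNReal.toReal_mono hfin hmono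
  refine le_trans (le_of_eq ?_) htr
  rw [hUvol, ENNReal.toReal_sum (fun k _ => by
    rw [nsmul_eq_mul]
    exact ENNReal.mul_ne_top (ENNReal.natCast_ne_top _)
      (ENNReal.mul_ne_top (ENNReal.pow_ne_top ENNReal.ofReal_ne_top)
        (ENNReal.pow_ne_top ENNReal.ofReal_ne_top)))]
  refine Finset.sum_congr rfl fun k _ => ?_
  rw [nsmul_eq_mul, ENNReal.toReal_mul, ENNReal.toReal_mul, ENNReal.toReal_pow,
    ENNReal.toReal_pow, ENNReal.toReal_ofReal hβ0.le,
    ENNReal.toReal_ofReal (by linarith), ENNReal.toReal_natCast, mul_assoc]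
end
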